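/- Let ξ ∈ (0,1). The function La_ξ(θ) = ∫₀^∞ exp(−τ³/3 + θτ) τ^{−ξ} dτ is well defined for every θ ∈ ℝ (the integrand is Lebesgue integrable on (0,∞)), is three times differentiable, and solves Langer's equation: La_ξ'''(θ) = θ·La_ξ'(θ) + (1−ξ)·La_ξ(θ) for all θ ∈ ℝ. -/

import Mathlib

open Real MeasureTheory Set Filter Metric

noncomputable def Gla (α : ℝ) : ℝ → ℝ := fun θ =>
  ∫ τ in Set.Ioi (0 : ℝ), Real.exp (-τ ^ 3 / 3 + θ * τ) * τ ^ α

lemma cube_bound {b τ : ℝ} (hb : 0 ≤ b) (hτ : 0 ≤ τ) :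
    -τ ^ 3 / 3 + b * τ ≤ b * Real.sqrt (3 * b) := by
  have hs : Real.sqrt (3 * b) ^ 2 = 3 * b := Real.sq_sqrt (by linarith)
  have hs0 : 0 ≤ Real.sqrt (3 * b) := Real.sqrt_nonneg _
  rcases le_or_gt τ (Real.sqrt (3 * b)) with h | h
  · nlinarith [pow_nonneg hτ 3, mul_le_mul_of_nonneg_left h hb]
  · have h2 : 3 * b < τ ^ 2 := by nlinarith
    nlinarith [mul_nonneg hb hs0]

lemma tail_bound (α θ : ℝ) {τ : ℝ} (hτ : 1 ≤ τ) :
    Real.exp (-τ ^ 3 / 3 + θ * τ) * τ ^ α ≤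
      Real.exp ((|θ| + |α| + 1) * Real.sqrt (3 * (|θ| + |α| + 1))) * Real.exp (-τ) := by
  have hτ0 : 0 < τ := lt_of_lt_of_le one_pos hτ
  set b : ℝ := |θ| + |α| + 1 with hb
  have hb0 : 0 ≤ b := by positivity
  rw [Real.rpow_def_of_pos hτ0, ← Real.exp_add, ← Real.exp_add]
  apply Real.exp_le_exp.2
  have hlog : Real.log τ ≤ τ := (Real.log_le_sub_one_of_pos hτ0).trans (by linarith)
  have hlog0 : 0 ≤ Real.log τ := Real.log_nonneg hτ
  have h1 : Real.log τ * α ≤ |α| * τ := by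
    calc Real.log τ * α ≤ Real.log τ * |α| := by
          exact mul_le_mul_of_nonneg_left (le_abs_self α) hlog0
      _ ≤ τ * |α| := mul_le_mul_of_nonneg_right hlog (abs_nonneg α)
      _ = |α| * τ := mul_comm _ _
  have h2 : θ * τ ≤ |θ| * τ := mul_le_mul_of_nonneg_right (le_abs_self θ) (by linarith)
  have h3 : -τ ^ 3 / 3 + b * τ ≤ b * Real.sqrt (3 * b) := cube_bound hb0 (by linarith)
  nlinarith

lemma cont_on (α θ : ℝ) :
    ContinuousOn (fun τ : ℝ => Real.exp (-τ ^ 3 / 3 + θ * τ) * τ ^ α) (Set.Ioi 0) := by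
  apply ContinuousOn.mul
  · exact (Real.continuous_exp.comp (by continuity)).continuousOn
  · intro x hx
    exact (Real.continuousAt_rpow_const x α (Or.inl (ne_of_gt hx))).continuousWithinAt

lemma integ (α θ : ℝ) (hα : -1 < α) :
    IntegrableOn (fun τ : ℝ => Real.exp (-τ ^ 3 / 3 + θ * τ) * τ ^ α) (Set.Ioi 0) := by
  have hmeas : AEStronglyMeasurable (fun τ : ℝ => Real.exp (-τ ^ 3 / 3 + θ * τ) * τ ^ α)
      (volume.restrict (Set.Ioi (0:ℝ))) :=
    (cont_on α θ).aestronglyMeasurable measurableSet_Ioi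
  rw [← Set.Ioc_union_Ioi_eq_Ioi (zero_le_one (α := ℝ))]
  apply MeasureTheory.IntegrableOn.union
  · -- on Ioc 0 1
    have hbint : IntegrableOn (fun τ : ℝ => Real.exp |θ| * τ ^ α) (Set.Ioc (0:ℝ) 1) := by
      have := (intervalIntegral.integrableOn_Ioo_rpow_iff (one_pos)).2 hα
      exact ((this.congr_set_ae Ioo_ae_eq_Ioc.symm).const_mul _)
    apply Integrable.mono' hbint (hmeas.mono_set Ioc_subset_Ioi_self)
    filter_upwards [ae_restrict_mem measurableSet_Ioc] with τ hτ
    have h0 : 0 < τ := hτ.1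
    have h1 : τ ≤ 1 := hτ.2
    have hr : 0 ≤ τ ^ α := Real.rpow_nonneg h0.le α
    rw [norm_mul, Real.norm_eq_abs, Real.norm_eq_abs, abs_of_nonneg (Real.exp_nonneg _),
      abs_of_nonneg hr]
    apply mul_le_mul_of_nonneg_right _ hr
    apply Real.exp_le_exp.2
    nlinarith [pow_nonneg h0.le 3, le_abs_self θ, mul_le_mul_of_nonneg_right (le_abs_self θ) h0.le,
      mul_le_mul_of_nonneg_left h1 (abs_nonneg θ)]
  · -- on Ioi 1
    set C : ℝ := Real.exp ((|θ| + |α| + 1) * Real.sqrt (3 * (|θ| + |α| + 1)))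
    have hbint : IntegrableOn (fun τ : ℝ => C * Real.exp (-τ)) (Set.Ioi (1:ℝ)) := by
      have := (exp_neg_integrableOn_Ioi 1 (one_pos)).const_mul C
      simpa [IntegrableOn] using this
    apply Integrable.mono' hbint (hmeas.mono_set (Set.Ioi_subset_Ioi zero_le_one))
    filter_upwards [ae_restrict_mem measurableSet_Ioi] with τ hτ
    have h1 : (1:ℝ) ≤ τ := le_of_lt hτ
    have h0 : (0:ℝ) < τ := lt_of_lt_of_le one_pos h1
    have hr : 0 ≤ τ ^ α := Real.rpow_nonneg h0.le α
    rw [norm_mul, Real.norm_eq_abs, Real.norm_eq_abs, abs_of_nonneg (Real.exp_nonneg _),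
      abs_of_nonneg hr]
    exact tail_bound α θ h1

lemma Gla_deriv (α : ℝ) (hα : -1 < α) (θ : ℝ) :
    HasDerivAt (Gla α) (Gla (α + 1) θ) θ := by
  have key := hasDerivAt_integral_of_dominated_loc_of_deriv_le
    (μ := volume.restrict (Set.Ioi (0:ℝ)))
    (F := fun (t : ℝ) (τ : ℝ) => Real.exp (-τ ^ 3 / 3 + t * τ) * τ ^ α)
    (F' := fun (t : ℝ) (τ : ℝ) => Real.exp (-τ ^ 3 / 3 + t * τ) * τ ^ (α + 1))
    (x₀ := θ) (s := Metric.ball θ 1)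
    (bound := fun τ : ℝ => Real.exp (-τ ^ 3 / 3 + (|θ| + 1) * τ) * τ ^ (α + 1))
    (Metric.ball_mem_nhds θ one_pos)
    (Filter.Eventually.of_forall fun t => (integ α t hα).aestronglyMeasurable)
    (integ α θ hα)
    ((integ (α + 1) θ (by linarith)).aestronglyMeasurable)
    ?_ (integ (α + 1) (|θ| + 1) (by linarith)) ?_
  · exact key.2
  · filter_upwards [ae_restrict_mem measurableSet_Ioi] with τ hτ t ht
    have hτ0 : (0:ℝ) < τ := hτ
    have hr : 0 ≤ τ ^ (α + 1) := Real.rpow_nonneg hτ0.le _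
    rw [norm_mul, Real.norm_eq_abs, Real.norm_eq_abs, abs_of_nonneg (Real.exp_nonneg _),
      abs_of_nonneg hr]
    apply mul_le_mul_of_nonneg_right _ hr
    apply Real.exp_le_exp.2
    have : t ≤ |θ| + 1 := by
      have := abs_lt.1 (mem_ball_iff_norm.1 ht)
      have := le_abs_self θ
      linarith [this]
    nlinarith [mul_le_mul_of_nonneg_right this hτ0.le]
  · filter_upwards [ae_restrict_mem measurableSet_Ioi] with τ hτ t _
    have hτ0 : (0:ℝ) < τ := hτ
    have h1 : HasDerivAt (fun t : ℝ => -τ ^ 3 / 3 + t * τ) τ t := by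
      exact ((hasDerivAt_const t (-τ ^ 3 / 3)).add ((hasDerivAt_id t).mul_const τ)).congr_deriv (by simp)
    have h2 := (h1.exp).mul_const (τ ^ α)
    refine h2.congr_deriv ?_
    rw [Real.rpow_add_one hτ0.ne']
    ring

lemma Gla_ode (ξ θ : ℝ) (h0 : 0 < ξ) (h1 : ξ < 1) :
    Gla (3 - ξ) θ = θ * Gla (1 - ξ) θ + (1 - ξ) * Gla (-ξ) θ := by
  set g : ℝ → ℝ := fun τ => Real.exp (-τ ^ 3 / 3 + θ * τ) * τ ^ (1 - ξ) with hg
  set g' : ℝ → ℝ := fun τ =>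
    -(Real.exp (-τ ^ 3 / 3 + θ * τ) * τ ^ (3 - ξ))
      + θ * (Real.exp (-τ ^ 3 / 3 + θ * τ) * τ ^ (1 - ξ))
      + (1 - ξ) * (Real.exp (-τ ^ 3 / 3 + θ * τ) * τ ^ (-ξ)) with hg'
  have i3 := integ (3 - ξ) θ (by linarith)
  have i1 := integ (1 - ξ) θ (by linarith)
  have i0 := integ (-ξ) θ (by linarith)
  have hgint : IntegrableOn g' (Set.Ioi 0) := (i3.neg.add (i1.const_mul θ)).add (i0.const_mul (1 - ξ))
  have hderiv : ∀ τ ∈ Set.Ioi (0:ℝ), HasDerivAt g (g' τ) τ := by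
    intro τ hτ
    have hτ0 : (0:ℝ) < τ := hτ
    have hu : HasDerivAt (fun τ : ℝ => -τ ^ 3 / 3 + θ * τ) (-τ ^ 2 + θ) τ := by
      have := ((hasDerivAt_pow 3 τ).neg.div_const 3).add ((hasDerivAt_id τ).const_mul θ)
      exact this.congr_deriv (by simp; ring)
    have hr : HasDerivAt (fun x : ℝ => x ^ (1 - ξ)) ((1 - ξ) * τ ^ (-ξ)) τ := by
      have := Real.hasDerivAt_rpow_const (x := τ) (p := 1 - ξ) (Or.inl hτ0.ne')
      convert this using 2
      ring
    have := (hu.exp).mul hr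
    refine this.congr_deriv ?_
    have e3 : τ ^ (3 - ξ) = τ ^ (1 - ξ) * τ ^ 2 := by
      rw [show (3 - ξ : ℝ) = (1 - ξ) + 1 + 1 by ring, Real.rpow_add_one hτ0.ne',
         Real.rpow_add_one hτ0.ne']
      ring
    simp only [hg', e3]
    ring
  have hcont : ContinuousWithinAt g (Set.Ici 0) 0 := by
    apply ContinuousAt.continuousWithinAt
    apply ContinuousAt.mul
    · exact (Real.continuous_exp.comp (by continuity)).continuousAt
    · exact Real.continuousAt_rpow_const 0 (1 - ξ) (Or.inr (by linarith))
  have htend : Tendsto g atTop (nhds 0) := by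
    set C : ℝ := Real.exp ((|θ| + |1 - ξ| + 1) * Real.sqrt (3 * (|θ| + |1 - ξ| + 1)))
    have hC : Tendsto (fun τ : ℝ => C * Real.exp (-τ)) atTop (nhds 0) := by
      have := (Real.tendsto_exp_atBot).comp tendsto_neg_atTop_atBot
      simpa using this.const_mul C
    apply squeeze_zero' _ _ hC
    · filter_upwards [eventually_ge_atTop (1:ℝ)] with τ hτ
      exact mul_nonneg (Real.exp_nonneg _) (Real.rpow_nonneg (by linarith) _)
    · filter_upwards [eventually_ge_atTop (1:ℝ)] with τ hτ
      exact tail_bound (1 - ξ) θ hτ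
  have key := integral_Ioi_of_hasDerivAt_of_tendsto hcont hderiv hgint htend
  have hg0 : g 0 = 0 := by
    simp [hg, Real.zero_rpow (by linarith : (1 - ξ : ℝ) ≠ 0)]
  rw [hg0, sub_zero] at key
  have split : ∫ τ in Set.Ioi (0:ℝ), g' τ =
      -Gla (3 - ξ) θ + θ * Gla (1 - ξ) θ + (1 - ξ) * Gla (-ξ) θ := by
    have hf1 : Integrable (fun τ : ℝ => -(Real.exp (-τ ^ 3 / 3 + θ * τ) * τ ^ (3 - ξ))
        + θ * (Real.exp (-τ ^ 3 / 3 + θ * τ) * τ ^ (1 - ξ)))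
        (volume.restrict (Set.Ioi 0)) := i3.neg.add (i1.const_mul θ)
    have hf2 : Integrable (fun τ : ℝ => (1 - ξ) * (Real.exp (-τ ^ 3 / 3 + θ * τ) * τ ^ (-ξ)))
        (volume.restrict (Set.Ioi 0)) := i0.const_mul (1 - ξ)
    have hf3 : Integrable (fun τ : ℝ => -(Real.exp (-τ ^ 3 / 3 + θ * τ) * τ ^ (3 - ξ)))
        (volume.restrict (Set.Ioi 0)) := i3.neg
    have hf4 : Integrable (fun τ : ℝ => θ * (Real.exp (-τ ^ 3 / 3 + θ * τ) * τ ^ (1 - ξ)))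
        (volume.restrict (Set.Ioi 0)) := i1.const_mul θ
    calc ∫ τ in Set.Ioi (0:ℝ), g' τ
        = (∫ τ in Set.Ioi (0:ℝ), (-(Real.exp (-τ ^ 3 / 3 + θ * τ) * τ ^ (3 - ξ))
            + θ * (Real.exp (-τ ^ 3 / 3 + θ * τ) * τ ^ (1 - ξ))))
          + ∫ τ in Set.Ioi (0:ℝ), (1 - ξ) * (Real.exp (-τ ^ 3 / 3 + θ * τ) * τ ^ (-ξ)) :=
          integral_add hf1 hf2
      _ = ((∫ τ in Set.Ioi (0:ℝ), -(Real.exp (-τ ^ 3 / 3 + θ * τ) * τ ^ (3 - ξ)))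
            + ∫ τ in Set.Ioi (0:ℝ), θ * (Real.exp (-τ ^ 3 / 3 + θ * τ) * τ ^ (1 - ξ)))
          + ∫ τ in Set.Ioi (0:ℝ), (1 - ξ) * (Real.exp (-τ ^ 3 / 3 + θ * τ) * τ ^ (-ξ)) := by
          rw [integral_add hf3 hf4]
      _ = -Gla (3 - ξ) θ + θ * Gla (1 - ξ) θ + (1 - ξ) * Gla (-ξ) θ := by
          rw [integral_neg, integral_const_mul, integral_const_mul]
          rfl
  rw [split] at key
  linarith

/-- For `ξ ∈ (0,1)`, `La_ξ(θ) = ∫₀^∞ exp(−τ³/3 + θτ) τ^{−ξ} dτ` is well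
defined (the integrand is integrable on `(0,∞)`) for every `θ`, is three times
differentiable, and solves Langer's equation
`La_ξ'''(θ) = θ·La_ξ'(θ) + (1−ξ)·La_ξ(θ)`. -/
theorem La_solves_langer (ξ : ℝ) (hξ : ξ ∈ Set.Ioo (0 : ℝ) 1) :
    let La : ℝ → ℝ := fun θ => ∫ τ in Set.Ioi (0 : ℝ),
      Real.exp (-τ ^ 3 / 3 + θ * τ) * τ ^ (-ξ)
    (∀ θ : ℝ, IntegrableOn
      (fun τ : ℝ => Real.exp (-τ ^ 3 / 3 + θ * τ) * τ ^ (-ξ)) (Set.Ioi 0)) ∧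
    Differentiable ℝ La ∧
    Differentiable ℝ (deriv La) ∧
    Differentiable ℝ (deriv (deriv La)) ∧
    ∀ θ : ℝ, deriv (deriv (deriv La)) θ = θ * deriv La θ + (1 - ξ) * La θ := by
  obtain ⟨h0, h1⟩ := hξ
  intro La
  have hLa : La = Gla (-ξ) := rfl
  have d1 : deriv La = Gla (-ξ + 1) := by
    funext θ
    rw [hLa]
    exact (Gla_deriv (-ξ) (by linarith) θ).deriv
  have d2 : deriv (deriv La) = Gla (-ξ + 1 + 1) := by
    funext θ
    rw [d1]
    exact (Gla_deriv (-ξ + 1) (by linarith) θ).deriv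
  have d3 : deriv (deriv (deriv La)) = Gla (-ξ + 1 + 1 + 1) := by
    funext θ
    rw [d2]
    exact (Gla_deriv (-ξ + 1 + 1) (by linarith) θ).deriv
  refine ⟨fun θ => integ (-ξ) θ (by linarith), ?_, ?_, ?_, ?_⟩
  · rw [hLa]; exact fun θ => (Gla_deriv (-ξ) (by linarith) θ).differentiableAt
  · rw [d1]; exact fun θ => (Gla_deriv (-ξ + 1) (by linarith) θ).differentiableAt
  · rw [d2]; exact fun θ => (Gla_deriv (-ξ + 1 + 1) (by linarith) θ).differentiableAt
  · intro θ
    rw [d3, d1, hLa, show (-ξ + 1 + 1 + 1 : ℝ) = 3 - ξ by ring,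
      show (-ξ + 1 : ℝ) = 1 - ξ by ring]
    exact Gla_ode ξ θ h0 h1
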